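/- Let g = so(3), realized as the 3-dimensional real Lie algebra with basis e₁, e₂, e₃ and brackets [e₁,e₃] = -e₂, [e₂,e₃] = e₁, [e₁,e₂] = e₃. Then g × g admits an integrable complex structure. -/

import Mathlib

set_option maxHeartbeats 1000000

/-- Componentwise bracket on the product. -/
instance prodBracket {L : Type*} [LieRing L] : Bracket (L × L) (L × L) :=
  ⟨fun x y => (⁅x.1, y.1⁆, ⁅x.2, y.2⁆)⟩

instance prodLieRing {L : Type*} [LieRing L] : LieRing (L × L) where
  add_lie x y z := by ext <;> simp [Bracket.bracket]
  lie_add x y z := by ext <;> simp [Bracket.bracket]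
  lie_self x := by ext <;> simp [Bracket.bracket]
  leibniz_lie x y z := by ext <;> simp [Bracket.bracket]

instance prodLieAlgebra {L : Type*} [LieRing L] [LieAlgebra ℝ L] : LieAlgebra ℝ (L × L) where
  lie_smul t x y := by ext <;> simp [Bracket.bracket]

theorem prod_bracket_def {L : Type*} [LieRing L] (x y : L × L) :
    ⁅x, y⁆ = (⁅x.1, y.1⁆, ⁅x.2, y.2⁆) := rfl

theorem so3_product_admits {g : Type*} [LieRing g] [LieAlgebra ℝ g]
    (b : Module.Basis (Fin 3) ℝ g) 
    (h13 : ⁅b 0, b 2⁆ = -b 1) (h23 : ⁅b 1, b 2⁆ = b 0) (h12 : ⁅b 0, b 1⁆ = b 2) :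
    ∃ 𝒥 : (g × g) →ₗ[ℝ] (g × g), (∀ x, 𝒥 (𝒥 x) = -x) ∧
      ∀ x y : g × g,
        ⁅x, y⁆ + 𝒥 ⁅𝒥 x, y⁆ + 𝒥 ⁅x, 𝒥 y⁆ - ⁅𝒥 x, 𝒥 y⁆ = 0 := by
  have h31 : ⁅b 2, b 0⁆ = b 1 := by rw [← lie_skew, h13]; simp
  have h32 : ⁅b 2, b 1⁆ = -b 0 := by rw [← lie_skew, h23]
  have h21 : ⁅b 1, b 0⁆ = -b 2 := by rw [← lie_skew, h12]
  set B : Module.Basis (Fin 3 ⊕ Fin 3) ℝ (g × g) := b.prod b with hB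
  let f : Fin 3 ⊕ Fin 3 → g × g :=
    Sum.elim ![(b 1, 0), (-b 0, 0), (0, b 2)] ![(0, b 1), (0, -b 0), (-b 2, 0)]
  set J : (g × g) →ₗ[ℝ] (g × g) := B.constr ℝ f with hJ
  have hBl : ∀ i, B (Sum.inl i) = (b i, 0) := by
    intro i; ext
    · exact b.prod_apply_inl_fst b i
    · exact b.prod_apply_inl_snd b i
  have hBr : ∀ i, B (Sum.inr i) = (0, b i) := by
    intro i; ext
    · exact b.prod_apply_inr_fst b i
    · exact b.prod_apply_inr_snd b i
  have hJl : ∀ i, J (b i, 0) = f (Sum.inl i) := fun i => by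
    rw [← hBl i, hJ]; exact B.constr_basis ℝ f _
  have hJr : ∀ i, J (0, b i) = f (Sum.inr i) := fun i => by
    rw [← hBr i, hJ]; exact B.constr_basis ℝ f _
  have j0 : J (b 0, 0) = (b 1, 0) := hJl 0
  have j1 : J (b 1, 0) = (-b 0, 0) := hJl 1
  have j2 : J (b 2, 0) = (0, b 2) := hJl 2
  have j3 : J (0, b 0) = (0, b 1) := hJr 0
  have j4 : J (0, b 1) = (0, -b 0) := hJr 1
  have j5 : J (0, b 2) = (-b 2, 0) := hJr 2
  have negl : ∀ x : g, ((-x, (0 : g)) : g × g) = -(x, (0 : g)) := by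
    intro x; ext <;> simp
  have negr : ∀ x : g, (((0 : g), -x) : g × g) = -((0 : g), x) := by
    intro x; ext <;> simp
  have n0 : J (-b 0, 0) = (-b 1, 0) := by rw [negl, map_neg, j0, negl]
  have n1 : J (-b 1, 0) = (b 0, 0) := by rw [negl, map_neg, j1, negl, neg_neg]
  have n2 : J (-b 2, 0) = (0, -b 2) := by rw [negl, map_neg, j2, negr]
  have n3 : J (0, -b 0) = (0, -b 1) := by rw [negr, map_neg, j3, negr]
  have n4 : J (0, -b 1) = (0, b 0) := by rw [negr, map_neg, j4, negr, neg_neg]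
  have n5 : J (0, -b 2) = (b 2, 0) := by rw [negr, map_neg, j5, negl, neg_neg]
  have hsq : ∀ x, J (J x) = -x := by
    have h : (J ∘ₗ J) = -LinearMap.id := by
      apply B.ext
      intro i
      rcases i with i | i <;> fin_cases i <;>
        simp [hBl, hBr, j0, j1, j2, j3, j4, j5, n0, n1, n2, n3, n4, n5,
          Prod.neg_mk, Prod.ext_iff]
    intro x
    have := LinearMap.congr_fun h x
    simpa using this
  refine ⟨J, hsq, ?_⟩
  have key : (LinearMap.mk₂ ℝ
      (fun x y : g × g => ⁅x, y⁆ + J ⁅J x, y⁆ + J ⁅x, J y⁆ - ⁅J x, J y⁆)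
      (by intro x x' y; simp only [add_lie, map_add, lie_add]; abel)
      (by intro t x y; simp only [smul_lie, map_smul, lie_smul, smul_add, smul_sub])
      (by intro x y y'; simp only [lie_add, map_add, add_lie]; abel)
      (by intro t x y; simp only [lie_smul, map_smul, smul_lie, smul_add, smul_sub])) = 0 := by
    apply B.ext; intro i
    apply B.ext; intro j
    rcases i with i | i <;> rcases j with j | j <;> fin_cases i <;> fin_cases j <;>
      simp [hBl, hBr, prod_bracket_def, h12, h13, h23, h21, h31, h32,
        j0, j1, j2, j3, j4, j5, n0, n1, n2, n3, n4, n5, Prod.ext_iff, Prod.mk_zero_zero, map_zero]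
  intro x y
  exact LinearMap.congr_fun (LinearMap.congr_fun key x) y
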